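/- (Splitting direction of Lemma 3, induction step) With the setup of the interleaved product formula, suppose P = ∫_Π(P_1, …, P_m; P_S) with P_1 memoryless over A_1 = B_1 ∪ B_2, and define P′ = ∫_{Π′}(Q_1, Q_2, P_2, …, P_m; P_S′) where Q_j(b) = P_1(b)/P_1(B_j) for b ∈ B_j, and P_S′(A | s′) = P_S(A | ψ(s′)) for A = A_i (i ≥ 2), and P_S′(B_j | s′) = P_S(A_1 | ψ(s′)) · P_1(B_j) for j = 1, 2, where ψ replaces occurrences of B_1, B_2 by A_1 in states. Then P(u^n) = P′(u^n) for every n ≥ 0 and every string u^n over A. -/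

import Mathlib

/-- Splitting direction of Lemma 3: interleaving with a memoryless component `P₁` over
`A₁ = B₁ ∪ B₂` yields the same process as the refined interleaving in which `A₁` is split
into `B₁, B₂` with renormalized memoryless components `Q_j(b) = P₁(b)/P₁(B_j)` and refined
switch `P_S′(A|s′) = P_S(A|ψ(s′))` for `A = A_i` (`i ≥ 2`) and
`P_S′(B_j|s′) = P_S(A₁|ψ(s′))·P₁(B_j)`: the two recursively defined interleaved
probability assignments `Pr` and `Pr'` agree on every string. -/
theorem memoryless_splitting_IMP
    {α ι ι' : Type*} [Fintype α] [DecidableEq α] [Fintype ι] [DecidableEq ι]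
    [Fintype ι'] [DecidableEq ι']
    (part : α → ι) (part' : α → ι') (ψ : ι' → ι)
    (hcompat : ∀ a, ψ (part' a) = part a)
    (i₁ : ι) (b₁ b₂ : ι') (hb : b₁ ≠ b₂)
    (hψb₁ : ψ b₁ = i₁) (hψb₂ : ψ b₂ = i₁)
    (hfiber : ∀ j', ψ j' = i₁ → j' = b₁ ∨ j' = b₂)
    (hinj : ∀ j' j'', j' ≠ b₁ → j' ≠ b₂ → ψ j'' = ψ j' → j'' = j')
    -- the memoryless component `P₁` over `A₁`, with single-symbol probabilities `p`
    (p : α → ℝ) (hpnn : ∀ a, 0 ≤ p a)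
    (p₁ p₂ : ℝ)
    (hp₁ : p₁ = ∑ a ∈ Finset.univ.filter (fun a => part' a = b₁), p a)
    (hp₂ : p₂ = ∑ a ∈ Finset.univ.filter (fun a => part' a = b₂), p a)
    (hp₁pos : 0 < p₁) (hp₂pos : 0 < p₂) (hp₁₂ : p₁ + p₂ = 1)
    (Pc : ι → List α → ℝ) (hPc₁ : ∀ u : List α, Pc i₁ u = (u.map p).prod)
    (Q : ι' → List α → ℝ)
    (hQ₁ : ∀ u : List α, Q b₁ u = (u.map (fun a => p a / p₁)).prod)
    (hQ₂ : ∀ u : List α, Q b₂ u = (u.map (fun a => p a / p₂)).prod)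
    (hQother : ∀ j', j' ≠ b₁ → j' ≠ b₂ → Q j' = Pc (ψ j'))
    (PS : List ι → ℝ) (PS' : List ι' → ℝ)
    (hPS0 : PS [] = 1) (hPS'0 : PS' [] = 1)
    (hPSnn : ∀ U, 0 ≤ PS U)
    (hPSadd : ∀ U : List ι, ∑ i, PS (U ++ [i]) = PS U)
    (hPS' : ∀ (S' : List ι') (j' : ι'),
      PS' (S' ++ [j']) = PS' S' * (PS (S'.map ψ ++ [ψ j']) / PS (S'.map ψ)) *
        (if j' = b₁ then p₁ else if j' = b₂ then p₂ else 1))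
    (Pr Pr' : List α → ℝ) (hPr0 : Pr [] = 1) (hPr'0 : Pr' [] = 1)
    (hPr : ∀ (u : List α) (a : α),
      Pr (u ++ [a]) = Pr u * (PS (u.map part ++ [part a]) / PS (u.map part)) *
        (Pc (part a) (u.filter (fun x => decide (part x = part a)) ++ [a]) /
          Pc (part a) (u.filter (fun x => decide (part x = part a)))))
    (hPr' : ∀ (u : List α) (a : α),
      Pr' (u ++ [a]) = Pr' u * (PS' (u.map part' ++ [part' a]) / PS' (u.map part')) *
        (Q (part' a) (u.filter (fun x => decide (part' x = part' a)) ++ [a]) /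
          Q (part' a) (u.filter (fun x => decide (part' x = part' a))))) :
    ∀ u : List α, Pr u = Pr' u := by
  have hp₁ne : p₁ ≠ 0 := ne_of_gt hp₁pos
  have hp₂ne : p₂ ≠ 0 := ne_of_gt hp₂pos
  set wt : ι' → ℝ := fun j' => if j' = b₁ then p₁ else if j' = b₂ then p₂ else 1 with hwt
  have hwtpos : ∀ j', 0 < wt j' := by
    intro j'
    simp only [hwt]
    split_ifs
    · exact hp₁pos
    · exact hp₂pos
    · norm_num
  have hWpos : ∀ S' : List ι', 0 < (S'.map wt).prod := by
    intro S'
    induction S' with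
    | nil => simp
    | cons j t ih =>
      simp only [List.map_cons, List.prod_cons]
      exact mul_pos (hwtpos j) ih
  -- zero propagation for PS
  have hPSzero : ∀ (S : List ι) (i : ι), PS S = 0 → PS (S ++ [i]) = 0 := by
    intro S i h
    have hle : PS (S ++ [i]) ≤ ∑ j, PS (S ++ [j]) :=
      Finset.single_le_sum (f := fun j => PS (S ++ [j])) (fun j _ => hPSnn _)
        (Finset.mem_univ i)
    rw [hPSadd, h] at hle
    exact le_antisymm hle (hPSnn _)
  -- closed form for PS'
  have hPS'closed : ∀ S' : List ι', PS' S' = PS (S'.map ψ) * (S'.map wt).prod := by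
    intro S'
    induction S' using List.reverseRecOn with
    | nil => simp [hPS'0, hPS0]
    | append_singleton S' j' ih =>
      have hstep := hPS' S' j'
      rw [ih] at hstep
      rw [hstep]
      simp only [List.map_append, List.prod_append, List.map_cons, List.map_nil,
        List.prod_cons, List.prod_nil, mul_one]
      rcases eq_or_ne (PS (S'.map ψ)) 0 with h0 | h0
      · rw [h0, hPSzero _ _ h0]
        ring
      · have hwtj : wt j' = if j' = b₁ then p₁ else if j' = b₂ then p₂ else 1 := rfl
        rw [← hwtj]
        field_simp
  -- product split over the two sub-blocks
  have hsplit : ∀ l : List α,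
      ((l.filter (fun x => decide (part x = i₁))).map p).prod =
        ((l.filter (fun x => decide (part' x = b₁))).map p).prod *
        ((l.filter (fun x => decide (part' x = b₂))).map p).prod := by
    intro l
    have hb' : b₂ ≠ b₁ := Ne.symm hb
    induction l with
    | nil => simp
    | cons x t ih =>
      by_cases h1 : part' x = b₁
      · have hx : part x = i₁ := by rw [← hcompat x, h1, hψb₁]
        have hx2 : part' x ≠ b₂ := by rw [h1]; exact hb
        simp only [List.filter_cons, hx, h1, hx2, hb, decide_true, decide_false,
          Bool.false_eq_true, if_true, if_false, List.map_cons, List.prod_cons]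
        rw [ih]
        ring
      · by_cases h2 : part' x = b₂
        · have hx : part x = i₁ := by rw [← hcompat x, h2, hψb₂]
          simp only [List.filter_cons, hx, h1, h2, hb', decide_true, decide_false,
            Bool.false_eq_true, if_true, if_false, List.map_cons, List.prod_cons]
          rw [ih]
          ring
        · have hx : part x ≠ i₁ := by
            intro hc
            rcases hfiber (part' x) (by rw [hcompat x, hc]) with h | h
            · exact h1 h
            · exact h2 h
          simp only [List.filter_cons, hx, h1, h2, decide_false, if_false,
            decide_eq_true_eq]
          exact ih
  -- normalized product relation
  have hqprod : ∀ (l : List α) (c : ℝ), c ≠ 0 →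
      ((l.map (fun a => p a / c)).prod) * c ^ l.length = (l.map p).prod := by
    intro l c hc
    induction l with
    | nil => simp
    | cons x t ih =>
      simp only [List.map_cons, List.prod_cons, List.length_cons, pow_succ]
      rw [← ih]
      field_simp
  have hqne : ∀ (l : List α) (c : ℝ), c ≠ 0 → (l.map p).prod ≠ 0 →
      ((l.map (fun a => p a / c)).prod) ≠ 0 := by
    intro l c hc hl h0
    rw [← hqprod l c hc, h0, zero_mul] at hl
    exact hl rfl
  -- key algebraic cancellation
  have key : ∀ (c X Y pa : ℝ), c ≠ 0 → (X * c) / Y * (pa / c) = X / Y * pa := by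
    intro c X Y pa hc
    rw [div_mul_div_comm, div_mul_eq_mul_div,
      show X * c * pa = X * pa * c by ring, mul_div_mul_right _ _ hc]
  -- main induction with zero-invariant
  have main : ∀ u : List α, Pr u = Pr' u ∧
      (((u.filter (fun x => decide (part x = i₁))).map p).prod = 0 → Pr u = 0) := by
    intro u
    induction u using List.reverseRecOn with
    | nil =>
      constructor
      · rw [hPr0, hPr'0]
      · intro h
        simp at h
    | append_singleton u a ih =>
      obtain ⟨ih1, ih2⟩ := ih
      have hmapψ : (u.map part').map ψ = u.map part := by
        rw [List.map_map]
        congr 1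
        funext x
        exact hcompat x
      have hPS'rat : PS' (u.map part' ++ [part' a]) =
          (PS (u.map part ++ [part a]) * wt (part' a)) * ((u.map part').map wt).prod := by
        rw [hPS'closed]
        simp only [List.map_append, List.prod_append, List.map_cons, List.map_nil,
          List.prod_cons, List.prod_nil, mul_one, hmapψ, hcompat a]
        ring
      have hPS'den : PS' (u.map part') = PS (u.map part) * ((u.map part').map wt).prod := by
        rw [hPS'closed, hmapψ]
      have hWne : ((u.map part').map wt).prod ≠ 0 := ne_of_gt (hWpos _)
      by_cases h1 : part' a = b₁
      · -- case B₁
        have hpa : part a = i₁ := by rw [← hcompat a, h1, hψb₁]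
        have hwta : wt (part' a) = p₁ := by simp [hwt, h1]
        have hfnew : ((u ++ [a]).filter (fun x => decide (part x = i₁))) =
            (u.filter (fun x => decide (part x = i₁))) ++ [a] := by
          rw [List.filter_append]
          simp [hpa]
        constructor
        · rw [hPr u a, hPr' u a, ← ih1, hPS'rat, hPS'den, hwta]
          simp only [h1, hpa, hQ₁, hPc₁]
          rw [mul_div_mul_right _ _ hWne]
          set f := u.filter (fun x => decide (part x = i₁)) with hf
          set f' := u.filter (fun x => decide (part' x = b₁)) with hf'
          rcases eq_or_ne ((f.map p).prod) 0 with h0 | h0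
          · rw [ih2 h0]
            ring
          · have hf'ne : ((f'.map p).prod) ≠ 0 := by
              intro hc
              apply h0
              rw [hf, hsplit u, ← hf', hc, zero_mul]
            have hq'ne : ((f'.map (fun a => p a / p₁)).prod) ≠ 0 := hqne f' p₁ hp₁ne hf'ne
            simp only [List.map_append, List.prod_append, List.map_cons, List.map_nil,
              List.prod_cons, List.prod_nil, mul_one]
            rw [mul_div_cancel_left₀ _ h0, mul_div_cancel_left₀ _ hq'ne,
              mul_assoc, mul_assoc, key p₁ _ _ _ hp₁ne]
        · intro h0
          rw [hfnew, List.map_append, List.prod_append] at h0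
          simp only [List.map_cons, List.map_nil, List.prod_cons, List.prod_nil,
            mul_one] at h0
          rcases mul_eq_zero.mp h0 with h0 | h0
          · rw [hPr u a, ih2 h0]
            ring
          · rw [hPr u a]
            simp only [hpa, hPc₁, List.map_append, List.prod_append, List.map_cons,
              List.map_nil, List.prod_cons, List.prod_nil, mul_one, h0, mul_zero,
              zero_div]
      · by_cases h2 : part' a = b₂
        · -- case B₂
          have hpa : part a = i₁ := by rw [← hcompat a, h2, hψb₂]
          have hwta : wt (part' a) = p₂ := by
            simp [hwt, h2, Ne.symm hb]
          have hfnew : ((u ++ [a]).filter (fun x => decide (part x = i₁))) =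
              (u.filter (fun x => decide (part x = i₁))) ++ [a] := by
            rw [List.filter_append]
            simp [hpa]
          constructor
          · rw [hPr u a, hPr' u a, ← ih1, hPS'rat, hPS'den, hwta]
            simp only [h2, hpa, hQ₂, hPc₁]
            rw [mul_div_mul_right _ _ hWne]
            set f := u.filter (fun x => decide (part x = i₁)) with hf
            set f' := u.filter (fun x => decide (part' x = b₂)) with hf'
            rcases eq_or_ne ((f.map p).prod) 0 with h0 | h0
            · rw [ih2 h0]
              ring
            · have hf'ne : ((f'.map p).prod) ≠ 0 := by
                intro hc
                apply h0
                rw [hf, hsplit u, ← hf', hc, mul_zero]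
              have hq'ne : ((f'.map (fun a => p a / p₂)).prod) ≠ 0 := hqne f' p₂ hp₂ne hf'ne
              simp only [List.map_append, List.prod_append, List.map_cons, List.map_nil,
                List.prod_cons, List.prod_nil, mul_one]
              rw [mul_div_cancel_left₀ _ h0, mul_div_cancel_left₀ _ hq'ne,
                mul_assoc, mul_assoc, key p₂ _ _ _ hp₂ne]
          · intro h0
            rw [hfnew, List.map_append, List.prod_append] at h0
            simp only [List.map_cons, List.map_nil, List.prod_cons, List.prod_nil,
              mul_one] at h0
            rcases mul_eq_zero.mp h0 with h0 | h0
            · rw [hPr u a, ih2 h0]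
              ring
            · rw [hPr u a]
              simp only [hpa, hPc₁, List.map_append, List.prod_append, List.map_cons,
                List.map_nil, List.prod_cons, List.prod_nil, mul_one, h0, mul_zero,
                zero_div]
        · -- case A: part' a not in {b₁, b₂}
          have hpa : part a ≠ i₁ := by
            intro hc
            rcases hfiber (part' a) (by rw [hcompat a, hc]) with h | h
            · exact h1 h
            · exact h2 h
          have hwta : wt (part' a) = 1 := by
            simp only [hwt]
            rw [if_neg h1, if_neg h2]
          have hfeq : (fun x => decide (part' x = part' a)) =
              (fun x => decide (part x = part a)) := by
            funext x
            rcases eq_or_ne (part' x) (part' a) with h | h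
            · have : part x = part a := by rw [← hcompat x, ← hcompat a, h]
              simp [h, this]
            · have : part x ≠ part a := by
                intro hc
                exact h (hinj (part' a) (part' x) h1 h2 (by rw [hcompat x, hcompat a, hc]))
              simp [h, this]
          constructor
          · rw [hPr u a, hPr' u a, ← ih1, hPS'rat, hPS'den, hwta]
            rw [hfeq, hQother (part' a) h1 h2, hcompat a]
            rw [mul_one, mul_div_mul_right _ _ hWne]
          · intro h0
            have hfnew : ((u ++ [a]).filter (fun x => decide (part x = i₁))) =
                (u.filter (fun x => decide (part x = i₁))) := by
              rw [List.filter_append]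
              simp [hpa]
            rw [hfnew] at h0
            rw [hPr u a, ih2 h0]
            ring
  exact fun u => (main u).1
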